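/- Let 1 < q < 2 and let f ∈ L^{2/(2−q)}(ℝ³). Let (u_n) be a sequence in L²(ℝ³) with sup_n |u_n|_2 < ∞ and let u ∈ L²(ℝ³) be such that u_n → u strongly in L²(B_R(0)) for every R > 0. Then ∫_{ℝ³} f(x)|u_n|^q dx → ∫_{ℝ³} f(x)|u|^q dx as n → ∞. -/

import Mathlib

open MeasureTheory Filter Real
open scoped ENNReal Topology

/-- MVT step: for `0 ≤ b ≤ a` and `1 ≤ q`, `a^q - b^q ≤ q * a^(q-1) * (a-b)`. -/
lemma rpow_sub_rpow_le_mvt {q a b : ℝ} (hq : 1 ≤ q) (hb : 0 ≤ b) (hba : b ≤ a) :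
    a ^ q - b ^ q ≤ q * a ^ (q - 1) * (a - b) := by
  rcases eq_or_lt_of_le hba with rfl | hlt
  · simp only [sub_self, mul_zero, le_refl]
  have hderiv : ∀ x : ℝ, HasDerivAt (fun y : ℝ => y ^ q) (q * x ^ (q - 1)) x := by
    intro x
    have := Real.hasDerivAt_rpow_const (x := x) (p := q) (Or.inr hq)
    simpa [mul_comm] using this
  obtain ⟨c, hc, hceq⟩ := exists_hasDerivAt_eq_slope (fun y : ℝ => y ^ q)
    (fun x => q * x ^ (q - 1)) hlt
    (fun x _ => (hderiv x).continuousAt.continuousWithinAt)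
    (fun x _ => hderiv x)
  have hc0 : 0 ≤ c := le_trans hb hc.1.le
  have : a ^ q - b ^ q = q * c ^ (q - 1) * (a - b) := by
    have hab : a - b ≠ 0 := sub_ne_zero.2 hlt.ne'
    rw [eq_div_iff hab] at hceq
    linarith [hceq]
  rw [this]
  have hcq : c ^ (q - 1) ≤ a ^ (q - 1) :=
    Real.rpow_le_rpow hc0 hc.2.le (by linarith)
  have hq0 : (0:ℝ) ≤ q := by linarith
  exact mul_le_mul_of_nonneg_right (mul_le_mul_of_nonneg_left hcq hq0) (sub_nonneg.2 hba)

lemma abs_rpow_sub_abs_rpow_le {q : ℝ} (hq : 1 ≤ q) (a b : ℝ) :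
    |(|a| ^ q - |b| ^ q)| ≤ q * (|a| ^ (q - 1) + |b| ^ (q - 1)) * |a - b| := by
  have key : ∀ a b : ℝ, |b| ≤ |a| →
      |(|a| ^ q - |b| ^ q)| ≤ q * (|a| ^ (q - 1) + |b| ^ (q - 1)) * |a - b| := by
    intro a b h
    have h1 : |a| ^ q - |b| ^ q ≤ q * |a| ^ (q - 1) * (|a| - |b|) :=
      rpow_sub_rpow_le_mvt hq (abs_nonneg b) h
    have h2 : (0:ℝ) ≤ |a| ^ q - |b| ^ q :=
      sub_nonneg.2 (Real.rpow_le_rpow (abs_nonneg b) h (by linarith))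
    rw [abs_of_nonneg h2]
    have h3 : |a| - |b| ≤ |a - b| := abs_sub_abs_le_abs_sub a b
    have h4 : (0:ℝ) ≤ |a| ^ (q-1) := Real.rpow_nonneg (abs_nonneg a) _
    have h5 : (0:ℝ) ≤ |b| ^ (q-1) := Real.rpow_nonneg (abs_nonneg b) _
    have hq0 : (0:ℝ) ≤ q := by linarith
    nlinarith [mul_le_mul_of_nonneg_left h3 (mul_nonneg hq0 h4), mul_nonneg (mul_nonneg hq0 h5) (abs_nonneg (a-b))]
  rcases le_total |b| |a| with h | h
  · exact key a b h
  · have := key b a h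
    calc |(|a| ^ q - |b| ^ q)| = |(|b| ^ q - |a| ^ q)| := by rw [abs_sub_comm]
    _ ≤ q * (|b| ^ (q-1) + |a| ^ (q-1)) * |b - a| := this
    _ = q * (|a| ^ (q-1) + |b| ^ (q-1)) * |a - b| := by rw [abs_sub_comm]; ring

/-- Hölder for pointwise products of real functions, eLpNorm form. -/
lemma eLpNorm_mul_le_mul {α : Type*} [MeasurableSpace α] {μ : Measure α} {f g : α → ℝ}
    (hf : AEStronglyMeasurable f μ) (hg : AEStronglyMeasurable g μ) {p q r : ℝ≥0∞}
    (hpqr : 1 / p = 1 / q + 1 / r) :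
    eLpNorm (fun x => f x * g x) p μ ≤ eLpNorm f q μ * eLpNorm g r μ :=
  by
    haveI : ENNReal.HolderTriple q r p := ⟨by simpa [one_div] using hpqr.symm⟩
    simpa using eLpNorm_le_eLpNorm_mul_eLpNorm'_of_norm (p := q) (q := r) (r := p) hf hg (· * ·) 1
      (Eventually.of_forall fun x => by simp [Real.norm_eq_abs, abs_mul, le_refl])

/-- Small tails in `L^P` along a decreasing sequence of sets with empty intersection. -/
lemma exists_eLpNorm_indicator_le {α : Type*} [MeasurableSpace α] {μ : Measure α}
    {f : α → ℝ} {P : ℝ≥0∞} (hP0 : P ≠ 0) (hPtop : P ≠ ∞) (hf : MemLp f P μ)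
    {s : ℕ → Set α} (hsm : ∀ k, MeasurableSet (s k)) (hanti : Antitone s)
    (hempty : ⋂ k, s k = ∅) {δ : ℝ≥0∞} (hδ : 0 < δ) :
    ∃ k, eLpNorm ((s k).indicator f) P μ ≤ δ := by
  rcases eq_or_ne δ ∞ with rfl | hδtop
  · exact ⟨0, le_top⟩
  set t := P.toReal with ht
  have ht0 : 0 < t := ENNReal.toReal_pos hP0 hPtop
  set F : α → ℝ≥0∞ := fun x => ‖f x‖ₑ ^ t with hF
  have hsnorm : ∀ k, eLpNorm ((s k).indicator f) P μ = (∫⁻ x in s k, F x ∂μ) ^ (1 / t) := by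
    intro k
    rw [eLpNorm_indicator_eq_eLpNorm_restrict (hsm k),
      eLpNorm_eq_lintegral_rpow_enorm_toReal hP0 hPtop]
  have htot : (∫⁻ x, F x ∂μ) ≠ ∞ := by
    intro h
    have := hf.2
    rw [eLpNorm_eq_lintegral_rpow_enorm_toReal hP0 hPtop] at this
    rw [← hF] at this
    rw [h] at this
    rw [ENNReal.top_rpow_of_pos (by positivity)] at this
    exact (lt_irrefl _ this).elim
  set ν := μ.withDensity F with hν
  have hν_apply : ∀ k, ν (s k) = ∫⁻ x in s k, F x ∂μ := fun k => withDensity_apply F (hsm k)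
  have htend : Tendsto (fun k => ν (s k)) atTop (𝓝 0) := by
    have h0 : ν (⋂ k, s k) = 0 := by rw [hempty]; exact measure_empty
    have := tendsto_measure_iInter_atTop (μ := ν)
      (fun k => (hsm k).nullMeasurableSet) hanti ⟨0, ?_⟩
    · rw [h0] at this; exact this
    · rw [hν_apply 0]
      exact (le_trans (setLIntegral_le_lintegral _ _) (le_of_eq rfl)).trans_lt htot.lt_top |>.ne
  have hεpos : 0 < δ ^ t := ENNReal.rpow_pos hδ hδtop
  obtain ⟨k, hk⟩ := (ENNReal.tendsto_nhds_zero.mp htend (δ ^ t) hεpos).exists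
  refine ⟨k, ?_⟩
  rw [hsnorm k, ← hν_apply k]
  calc (ν (s k)) ^ (1/t) ≤ (δ ^ t) ^ (1/t) := ENNReal.rpow_le_rpow hk (by positivity)
  _ = δ := by rw [← ENNReal.rpow_mul, mul_one_div_cancel ht0.ne', ENNReal.rpow_one]

/-- If `f ∈ L^{2/(2-q)}(ℝ³)`, `(uₙ)` is bounded in `L²(ℝ³)` and `uₙ → u` strongly in
`L²(B_R(0))` for every `R > 0`, then `∫ f |uₙ|^q → ∫ f |u|^q`. -/
theorem tendsto_integral_f_abs_pow
    (q : ℝ) (hq1 : 1 < q) (hq2 : q < 2)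
    (f : EuclideanSpace ℝ (Fin 3) → ℝ)
    (hf : MemLp f (ENNReal.ofReal (2 / (2 - q))) volume)
    (u : ℕ → EuclideanSpace ℝ (Fin 3) → ℝ) (v : EuclideanSpace ℝ (Fin 3) → ℝ)
    (hu : ∀ n, MemLp (u n) 2 volume) (hv : MemLp v 2 volume)
    (hbd : ∃ C : ℝ, ∀ n, eLpNorm (u n) 2 volume ≤ ENNReal.ofReal C)
    (hconv : ∀ R : ℝ, 0 < R →
      Tendsto (fun n => ∫ x in Metric.ball (0 : EuclideanSpace ℝ (Fin 3)) R,
        |u n x - v x| ^ (2 : ℕ)) atTop (nhds 0)) :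
    Tendsto (fun n => ∫ x, f x * |u n x| ^ q) atTop (nhds (∫ x, f x * |v x| ^ q)) := by
  obtain ⟨C, hC⟩ := hbd
  have hq0 : (0:ℝ) < q := by linarith
  have h2q : (0:ℝ) < 2 - q := by linarith
  have hq1' : (0:ℝ) < q - 1 := by linarith
  -- measurability helper
  have habs : ∀ (g : EuclideanSpace ℝ (Fin 3) → ℝ), AEStronglyMeasurable g volume → ∀ c : ℝ,
      AEStronglyMeasurable (fun x => |g x| ^ c) volume := by
    intro g hg c
    have := (hg.norm.aemeasurable.pow_const c).aestronglyMeasurable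
    simpa [Real.norm_eq_abs] using this
  -- eLpNorm of |g|^c at exponent 2/c
  have hrpow : ∀ (g : EuclideanSpace ℝ (Fin 3) → ℝ) (c : ℝ), 0 < c →
      eLpNorm (fun x => |g x| ^ c) (ENNReal.ofReal (2/c)) volume
        = eLpNorm g 2 volume ^ c := by
    intro g c hc
    have h1 : ENNReal.ofReal (2/c) * ENNReal.ofReal c = 2 := by
      rw [← ENNReal.ofReal_mul (by positivity), div_mul_cancel₀ _ hc.ne']
      simp
    calc eLpNorm (fun x => |g x| ^ c) (ENNReal.ofReal (2/c)) volume
        = eLpNorm (fun x => ‖g x‖ ^ c) (ENNReal.ofReal (2/c)) volume := by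
          simp [Real.norm_eq_abs]
    _ = eLpNorm g (ENNReal.ofReal (2/c) * ENNReal.ofReal c) volume ^ c :=
          eLpNorm_norm_rpow g hc
    _ = _ := by rw [h1]
  -- exponent identities
  have hsum1 : (1:ℝ≥0∞)/1 = 1/ENNReal.ofReal (2/(2-q)) + 1/ENNReal.ofReal (2/q) := by
    rw [one_div, one_div, one_div, ← ENNReal.ofReal_inv_of_pos (by positivity),
      ← ENNReal.ofReal_inv_of_pos (by positivity),
      ← ENNReal.ofReal_add (by positivity) (by positivity), inv_one]
    rw [show (2/(2-q))⁻¹ + (2/q)⁻¹ = 1 by rw [inv_div, inv_div]; field_simp; ring]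
    exact ENNReal.ofReal_one.symm
  have hsum2 : (1:ℝ≥0∞)/2 = 1/ENNReal.ofReal (2/(2-q)) + 1/ENNReal.ofReal (2/(q-1)) := by
    rw [one_div, one_div, one_div, ← ENNReal.ofReal_inv_of_pos (by positivity),
      ← ENNReal.ofReal_inv_of_pos (by positivity),
      ← ENNReal.ofReal_add (by positivity) (by positivity)]
    rw [show (2/(2-q))⁻¹ + (2/(q-1))⁻¹ = 2⁻¹ by rw [inv_div, inv_div]; field_simp; ring]
    rw [show ((2:ℝ≥0∞))⁻¹ = ENNReal.ofReal (2⁻¹) by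
      rw [ENNReal.ofReal_inv_of_pos (by norm_num)]; norm_num]
  have hhalf : (1:ℝ≥0∞)/1 = 1/2 + 1/2 := by
    rw [ENNReal.add_halves]; norm_num
  -- basic exponent positivity facts
  have hP1ne0 : ENNReal.ofReal (2/(2-q)) ≠ 0 := by
    simp only [ne_eq, ENNReal.ofReal_eq_zero, not_le]; positivity
  have hP1netop : ENNReal.ofReal (2/(2-q)) ≠ ∞ := ENNReal.ofReal_ne_top
  have hP2one : (1:ℝ≥0∞) ≤ ENNReal.ofReal (2/q) := by
    rw [show (1:ℝ≥0∞) = ENNReal.ofReal 1 by simp]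
    exact ENNReal.ofReal_le_ofReal (by rw [le_div_iff₀ hq0]; linarith)
  have hP3one : (1:ℝ≥0∞) ≤ ENNReal.ofReal (2/(q-1)) := by
    rw [show (1:ℝ≥0∞) = ENNReal.ofReal 1 by simp]
    exact ENNReal.ofReal_le_ofReal (by rw [le_div_iff₀ hq1']; linarith)
  -- MemLp of |g|^q
  have hmem_pow : ∀ (g : EuclideanSpace ℝ (Fin 3) → ℝ), MemLp g 2 volume →
      MemLp (fun x => |g x|^q) (ENNReal.ofReal (2/q)) volume := by
    intro g hg
    exact ⟨habs g hg.1 q, by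
      rw [hrpow g q hq0]
      exact ENNReal.rpow_lt_top_of_nonneg hq0.le hg.2.ne⟩
  -- integrability of f * |g|^q
  have hint : ∀ (g : EuclideanSpace ℝ (Fin 3) → ℝ), MemLp g 2 volume →
      Integrable (fun x => f x * |g x|^q) volume := by
    intro g hg
    haveI : ENNReal.HolderTriple (ENNReal.ofReal (2 / (2 - q))) (ENNReal.ofReal (2/q)) 1 :=
      ⟨by simpa [one_div] using hsum1.symm⟩
    have h := (hmem_pow g hg).smul hf (r := 1)
    have heq : (f • fun x => |g x|^q) = fun x => f x * |g x|^q := rfl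
    rw [heq] at h
    exact memLp_one_iff_integrable.mp h

  have mPhi : ∀ n, AEStronglyMeasurable
      (fun x => f x * (|u n x|^q - |v x|^q)) volume := fun n =>
    hf.1.mul ((habs (u n) (hu n).1 q).sub (habs v hv.1 q))
  -- MAIN ESTIMATE
  have key : Tendsto (fun n => eLpNorm (fun x => f x * (|u n x| ^ q - |v x| ^ q)) 1 volume)
      atTop (𝓝 0) := by
    rw [ENNReal.tendsto_nhds_zero]
    intro ε hε
    set M : ℝ≥0∞ := (ENNReal.ofReal C)^q + (eLpNorm v 2 volume)^q with hM
    have hMtop : M ≠ ∞ := by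
      rw [hM]
      exact ENNReal.add_ne_top.mpr
        ⟨(ENNReal.rpow_lt_top_of_nonneg hq0.le ENNReal.ofReal_ne_top).ne,
         (ENNReal.rpow_lt_top_of_nonneg hq0.le hv.2.ne).ne⟩
    have hw_bound : ∀ n,
        eLpNorm (fun x => |u n x|^q - |v x|^q) (ENNReal.ofReal (2/q)) volume ≤ M := by
      intro n
      have h1 : eLpNorm (fun x => |u n x|^q - |v x|^q) (ENNReal.ofReal (2/q)) volume
          ≤ eLpNorm (fun x => |u n x|^q) (ENNReal.ofReal (2/q)) volume
            + eLpNorm (fun x => |v x|^q) (ENNReal.ofReal (2/q)) volume :=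
        eLpNorm_sub_le (habs (u n) (hu n).1 q) (habs v hv.1 q) hP2one
      refine h1.trans ?_
      rw [hrpow (u n) q hq0, hrpow v q hq0, hM]
      exact add_le_add (ENNReal.rpow_le_rpow (hC n) hq0.le) le_rfl
    set K : ℝ≥0∞ := ENNReal.ofReal q * (eLpNorm f (ENNReal.ofReal (2/(2-q))) volume *
      ((ENNReal.ofReal C)^(q-1) + (eLpNorm v 2 volume)^(q-1))) with hK
    have hKtop : K ≠ ∞ := by
      rw [hK]
      exact ENNReal.mul_ne_top ENNReal.ofReal_ne_top
        (ENNReal.mul_ne_top hf.2.ne (ENNReal.add_ne_top.mpr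
          ⟨(ENNReal.rpow_lt_top_of_nonneg hq1'.le ENNReal.ofReal_ne_top).ne,
           (ENNReal.rpow_lt_top_of_nonneg hq1'.le hv.2.ne).ne⟩))
    have hε2 : (0:ℝ≥0∞) < ε/2 := ENNReal.half_pos hε.ne'
    obtain ⟨δ, hδpos, hδM⟩ : ∃ δ : ℝ≥0∞, 0 < δ ∧ δ * M ≤ ε/2 := by
      rcases eq_or_ne M 0 with hM0 | hM0
      · exact ⟨1, zero_lt_one, by simp [hM0]⟩
      · exact ⟨(ε/2)/M, ENNReal.div_pos hε2.ne' hMtop,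
          le_of_eq (ENNReal.div_mul_cancel hM0 hMtop)⟩
    obtain ⟨k, hk⟩ := exists_eLpNorm_indicator_le hP1ne0 hP1netop hf
      (s := fun k => (Metric.ball (0 : EuclideanSpace ℝ (Fin 3)) ((k:ℝ)+1))ᶜ)
      (fun k => measurableSet_ball.compl)
      (fun i j hij => Set.compl_subset_compl.mpr (Metric.ball_subset_ball
        (by have := (Nat.cast_le (α := ℝ)).mpr hij; linarith)))
      (by
        ext x
        simp only [Set.mem_iInter, Set.mem_compl_iff, Metric.mem_ball,
          Set.mem_empty_iff_false, iff_false, not_forall, not_not]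
        obtain ⟨m, hm⟩ := exists_nat_gt (dist x 0)
        exact ⟨m, by push_cast; linarith⟩)
      hδpos
    set B := Metric.ball (0 : EuclideanSpace ℝ (Fin 3)) ((k:ℝ)+1) with hBdef
    have hB : MeasurableSet B := measurableSet_ball
    -- tail estimate
    have htail : ∀ n,
        eLpNorm (Bᶜ.indicator (fun x => f x * (|u n x|^q - |v x|^q))) 1 volume ≤ ε/2 := by
      intro n
      have hind : Bᶜ.indicator (fun x => f x * (|u n x|^q - |v x|^q))
          = fun x => (Bᶜ.indicator f x) * (|u n x|^q - |v x|^q) := by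
        funext x
        by_cases hx : x ∈ Bᶜ
        · simp [Set.indicator_of_mem hx]
        · simp [Set.indicator_of_notMem hx]
      rw [hind]
      calc eLpNorm (fun x => (Bᶜ.indicator f x) * (|u n x|^q - |v x|^q)) 1 volume
          ≤ eLpNorm (Bᶜ.indicator f) (ENNReal.ofReal (2/(2-q))) volume *
            eLpNorm (fun x => |u n x|^q - |v x|^q) (ENNReal.ofReal (2/q)) volume :=
            eLpNorm_mul_le_mul (hf.1.indicator hB.compl)
              ((habs (u n) (hu n).1 q).sub (habs v hv.1 q)) hsum1
      _ ≤ δ * M := mul_le_mul' hk (hw_bound n)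
      _ ≤ ε/2 := hδM
    -- ball estimate
    have hball_le : ∀ n,
        eLpNorm (B.indicator (fun x => f x * (|u n x|^q - |v x|^q))) 1 volume
        ≤ K * eLpNorm (B.indicator (fun x => u n x - v x)) 2 volume := by
      intro n
      set Hn : EuclideanSpace ℝ (Fin 3) → ℝ := fun x => |u n x|^(q-1) + |v x|^(q-1) with hHn
      have hHm : AEStronglyMeasurable Hn volume :=
        (habs (u n) (hu n).1 (q-1)).add (habs v hv.1 (q-1))
      have hFm : AEStronglyMeasurable (fun x => f x * Hn x) volume := hf.1.mul hHm
      have hptwise : ∀ x, ‖B.indicator (fun y => f y * (|u n y|^q - |v y|^q)) x‖ ≤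
          ‖(q • fun y => f y * Hn y) x * (B.indicator (fun y => u n y - v y) x)‖ := by
        intro x
        by_cases hx : x ∈ B
        · rw [Set.indicator_of_mem hx, Set.indicator_of_mem hx]
          simp only [Pi.smul_apply, smul_eq_mul, Real.norm_eq_abs]
          have h1 := abs_rpow_sub_abs_rpow_le hq1.le (u n x) (v x)
          have hH0 : 0 ≤ Hn x :=
            add_nonneg (Real.rpow_nonneg (abs_nonneg _) _) (Real.rpow_nonneg (abs_nonneg _) _)
          calc |f x * (|u n x|^q - |v x|^q)|
              = |f x| * |(|u n x|^q - |v x|^q)| := abs_mul _ _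
          _ ≤ |f x| * (q * Hn x * |u n x - v x|) :=
              mul_le_mul_of_nonneg_left h1 (abs_nonneg _)
          _ = |q * (f x * Hn x) * (u n x - v x)| := by
              rw [abs_mul, abs_mul, abs_mul, abs_of_nonneg hq0.le, abs_of_nonneg hH0]; ring
        · rw [Set.indicator_of_notMem hx, Set.indicator_of_notMem hx]
          simp
      have hKF : (‖q‖₊ : ℝ≥0∞) * eLpNorm (fun y => f y * Hn y) 2 volume ≤ K := by
        have hq_nn : (‖q‖₊ : ℝ≥0∞) = ENNReal.ofReal q := by
          rw [← enorm_eq_nnnorm, ← ofReal_norm, Real.norm_eq_abs, abs_of_pos hq0]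
        have h2 : eLpNorm (fun y => f y * Hn y) 2 volume
            ≤ eLpNorm f (ENNReal.ofReal (2/(2-q))) volume *
              eLpNorm Hn (ENNReal.ofReal (2/(q-1))) volume :=
          eLpNorm_mul_le_mul hf.1 hHm hsum2
        have h3 : eLpNorm Hn (ENNReal.ofReal (2/(q-1))) volume
            ≤ (ENNReal.ofReal C)^(q-1) + (eLpNorm v 2 volume)^(q-1) := by
          have h4 : eLpNorm Hn (ENNReal.ofReal (2/(q-1))) volume
              ≤ eLpNorm (fun y => |u n y|^(q-1)) (ENNReal.ofReal (2/(q-1))) volume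
                + eLpNorm (fun y => |v y|^(q-1)) (ENNReal.ofReal (2/(q-1))) volume :=
            eLpNorm_add_le (habs (u n) (hu n).1 (q-1)) (habs v hv.1 (q-1)) hP3one
          refine h4.trans ?_
          rw [hrpow (u n) (q-1) hq1', hrpow v (q-1) hq1']
          exact add_le_add (ENNReal.rpow_le_rpow (hC n) hq1'.le) le_rfl
        rw [hq_nn, hK]
        exact mul_le_mul' le_rfl (h2.trans (mul_le_mul' le_rfl h3))
      calc eLpNorm (B.indicator (fun y => f y * (|u n y|^q - |v y|^q))) 1 volume
          ≤ eLpNorm (fun x => (q • fun y => f y * Hn y) x *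
              (B.indicator (fun y => u n y - v y) x)) 1 volume :=
            eLpNorm_mono_ae (Eventually.of_forall hptwise)
      _ ≤ eLpNorm (q • fun y => f y * Hn y) 2 volume *
            eLpNorm (B.indicator (fun y => u n y - v y)) 2 volume :=
            eLpNorm_mul_le_mul (hFm.const_smul q)
              (((hu n).sub hv).1.indicator hB) hhalf
      _ = (‖q‖₊ : ℝ≥0∞) * eLpNorm (fun y => f y * Hn y) 2 volume *
            eLpNorm (B.indicator (fun y => u n y - v y)) 2 volume := by
            rw [eLpNorm_const_smul, enorm_eq_nnnorm]
      _ ≤ K * eLpNorm (B.indicator (fun y => u n y - v y)) 2 volume :=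
            mul_le_mul' hKF le_rfl
    -- ball convergence
    have hcv : Tendsto (fun n => eLpNorm (B.indicator (fun x => u n x - v x)) 2 volume)
        atTop (𝓝 0) := by
      have hR : (0:ℝ) < (k:ℝ)+1 := by positivity
      have h2 := hconv ((k:ℝ)+1) hR
      have heq : ∀ n, eLpNorm (B.indicator (fun x => u n x - v x)) 2 volume
          = (ENNReal.ofReal (∫ x in B, |u n x - v x| ^ (2:ℕ))) ^ (1/(2:ℝ)) := by
        intro n
        rw [eLpNorm_indicator_eq_eLpNorm_restrict hB,
          eLpNorm_eq_lintegral_rpow_enorm_toReal (by norm_num) (by norm_num)]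
        have hi : Integrable (fun x => |u n x - v x| ^ (2:ℕ)) (volume.restrict B) := by
          have h3 := (((hu n).sub hv).restrict B).integrable_norm_rpow
            (by norm_num) (by norm_num)
          refine h3.congr (Eventually.of_forall fun x => ?_)
          simp only [Pi.sub_apply, ENNReal.toReal_ofNat, Real.norm_eq_abs]
          rw [show ((2:ℝ)) = ((2:ℕ):ℝ) by norm_num, Real.rpow_natCast]
        have hcoe : ∀ y : ℝ, ‖y‖ₑ ^ ((2:ℝ≥0∞)).toReal = ENNReal.ofReal (|y| ^ (2:ℕ)) := by
          intro y
          rw [ENNReal.toReal_ofNat, ← ofReal_norm,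
            ENNReal.ofReal_rpow_of_nonneg (norm_nonneg _) (by norm_num : (0:ℝ) ≤ 2)]
          congr 1
          rw [Real.norm_eq_abs, show ((2:ℝ)) = ((2:ℕ):ℝ) by norm_num, Real.rpow_natCast]
        rw [MeasureTheory.ofReal_integral_eq_lintegral_ofReal hi
          (Eventually.of_forall fun x => by positivity)]
        simp_rw [hcoe]
        rw [ENNReal.toReal_ofNat]
      simp_rw [heq]
      have h7 : Tendsto (fun n => ENNReal.ofReal (∫ x in B, |u n x - v x| ^ (2:ℕ)))
          atTop (𝓝 0) := by
        have := ENNReal.tendsto_ofReal (α := ℕ) (f := atTop) h2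
        simpa using this
      have h8 := (ENNReal.continuous_rpow_const (y := 1/(2:ℝ))).tendsto 0
      have := h8.comp h7
      simpa [ENNReal.zero_rpow_of_pos, Function.comp_def] using this
    have hev := ENNReal.tendsto_nhds_zero.mp
      (by simpa using (ENNReal.Tendsto.const_mul hcv (Or.inr hKtop))) (ε/2) hε2
    filter_upwards [hev] with n hn
    have hsplit : (fun x => f x * (|u n x|^q - |v x|^q)) =
        B.indicator (fun x => f x * (|u n x|^q - |v x|^q)) +
        Bᶜ.indicator (fun x => f x * (|u n x|^q - |v x|^q)) :=
      (Set.indicator_self_add_compl B _).symm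
    calc eLpNorm (fun x => f x * (|u n x|^q - |v x|^q)) 1 volume
        ≤ eLpNorm (B.indicator (fun x => f x * (|u n x|^q - |v x|^q))) 1 volume
          + eLpNorm (Bᶜ.indicator (fun x => f x * (|u n x|^q - |v x|^q))) 1 volume := by
          conv_lhs => rw [hsplit]
          exact eLpNorm_add_le ((mPhi n).indicator hB) ((mPhi n).indicator hB.compl) le_rfl
    _ ≤ ε/2 + ε/2 := add_le_add ((hball_le n).trans hn) (htail n)
    _ = ε := ENNReal.add_halves ε
  -- CONCLUSION
  have hintn : ∀ n, Integrable (fun x => f x * (|u n x|^q - |v x|^q)) volume := by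
    intro n
    simp only [mul_sub]
    exact (hint (u n) (hu n)).sub (hint v hv)
  have hdiff : ∀ n, ∫ x, f x * (|u n x|^q - |v x|^q)
      = (∫ x, f x * |u n x|^q) - ∫ x, f x * |v x|^q := by
    intro n
    rw [← integral_sub (hint (u n) (hu n)) (hint v hv)]
    congr 1; funext x; ring
  have hnorm_le : ∀ n, |(∫ x, f x * |u n x|^q) - ∫ x, f x * |v x|^q| ≤
      (eLpNorm (fun x => f x * (|u n x|^q - |v x|^q)) 1 volume).toReal := by
    intro n
    rw [← hdiff n, eLpNorm_one_eq_lintegral_enorm,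
      ← integral_norm_eq_lintegral_enorm (hintn n).1]
    calc |∫ x, f x * (|u n x|^q - |v x|^q)| = ‖∫ x, f x * (|u n x|^q - |v x|^q)‖ :=
        (Real.norm_eq_abs _).symm
    _ ≤ ∫ x, ‖f x * (|u n x|^q - |v x|^q)‖ := norm_integral_le_integral_norm _
  have hto : Tendsto (fun n =>
      (eLpNorm (fun x => f x * (|u n x|^q - |v x|^q)) 1 volume).toReal) atTop (𝓝 0) := by
    have := (ENNReal.tendsto_toReal (by simp : (0:ℝ≥0∞) ≠ ⊤)).comp key
    simpa [Function.comp_def] using this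
  have hzero : Tendsto (fun n => (∫ x, f x * |u n x|^q) - ∫ x, f x * |v x|^q)
      atTop (𝓝 0) :=
    squeeze_zero_norm (fun n => by simpa [Real.norm_eq_abs] using hnorm_le n) hto
  have hfinal := hzero.add_const (∫ x, f x * |v x|^q)
  simpa using hfinal
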